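/- Let K be a group and θ₁, θ₂ commuting surjective group endomorphisms of K. Then θ₁ and θ₂ *-commute if and only if θ₁ restricts to an automorphism of the subgroup ker θ₂. -/

import Mathlib

def StarCommute {X : Type*} (f g : X → X) : Prop :=
  ∀ x₁ x₂ : X, f x₁ = g x₂ → ∃! y : X, g y = x₁ ∧ f y = x₂

theorem stmt_4 {K : Type*} [Group K] (θ₁ θ₂ : K →* K)
    (hsurj₁ : Function.Surjective θ₁) (hsurj₂ : Function.Surjective θ₂)
    (hcomm : ∀ k : K, θ₁ (θ₂ k) = θ₂ (θ₁ k)) :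
    StarCommute θ₁ θ₂ ↔ Set.BijOn θ₁ (θ₂.ker : Set K) (θ₂.ker : Set K) := by
  constructor
  · intro hsc
    -- trivial intersection of kernels from uniqueness at (1,1)
    have htriv : ∀ y : K, θ₂ y = 1 → θ₁ y = 1 → y = 1 := by
      intro y hy2 hy1
      obtain ⟨z, hz, huniq⟩ := hsc 1 1 (by simp)
      have h1 := huniq y ⟨by simpa using hy2, by simpa using hy1⟩
      have h2 := huniq 1 ⟨by simp, by simp⟩
      rw [h1, h2]
    refine ⟨?_, ?_, ?_⟩
    · intro x hx
      have hx' : θ₂ x = 1 := hx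
      show θ₂ (θ₁ x) = 1
      rw [← hcomm, hx', map_one]
    · intro a ha b hb hab
      have ha' : θ₂ a = 1 := ha
      have hb' : θ₂ b = 1 := hb
      have h2 : θ₂ (a * b⁻¹) = 1 := by simp [ha', hb']
      have h1 : θ₁ (a * b⁻¹) = 1 := by
        simp only [map_mul, map_inv, hab]; simp
      have := htriv _ h2 h1
      exact mul_inv_eq_one.mp this
    · intro c hc
      have hc' : θ₂ c = 1 := hc
      obtain ⟨y, ⟨hy1, hy2⟩, _⟩ := hsc 1 c (by simp [hc'])
      exact ⟨y, show θ₂ y = 1 from hy1, hy2⟩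
  · intro hbij x₁ x₂ h
    obtain ⟨z, hz⟩ := hsurj₂ x₁
    have hker : (θ₁ z) * x₂⁻¹ ∈ θ₂.ker := by
      have : θ₂ (θ₁ z) = θ₂ x₂ := by rw [← hcomm, hz, h]
      simp [MonoidHom.mem_ker, this]
    obtain ⟨k, hk, hk1⟩ := hbij.surjOn hker
    have hk' : θ₂ k = 1 := hk
    refine ⟨k⁻¹ * z, ⟨?_, ?_⟩, ?_⟩
    · simp [map_mul, map_inv, hk', hz]
    · have : θ₁ k = (θ₁ z) * x₂⁻¹ := hk1
      simp [map_mul, map_inv, this]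
    · rintro y ⟨hy2, hy1⟩
      -- y * (k⁻¹*z)⁻¹ ∈ ker θ₂ and ker θ₁, mapped to 1
      have e2 : θ₂ (y * (k⁻¹ * z)⁻¹) = 1 := by
        simp [map_mul, map_inv, hy2, hk', hz]
      have e1 : θ₁ (y * (k⁻¹ * z)⁻¹) = 1 := by
        have hkeq : θ₁ k = (θ₁ z) * x₂⁻¹ := hk1
        simp [map_mul, map_inv, hy1, hkeq]
      have h1mem : (1 : K) ∈ θ₂.ker := by simp [MonoidHom.mem_ker]
      have hmem : y * (k⁻¹ * z)⁻¹ ∈ θ₂.ker := by simpa [MonoidHom.mem_ker] using e2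
      have := hbij.injOn hmem h1mem (by simpa using e1)
      have h' : y * (k⁻¹ * z)⁻¹ = 1 := this
      exact mul_inv_eq_one.mp h'
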